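/- Let g : ℂ → ℂ be holomorphic on the punctured unit disc 𝔻* = {z ∈ ℂ : 0 < |z| < 1} and let λ ∈ ℂ with 0 < |λ| < 1. If λ · g(λz) = g(z) for all z ∈ 𝔻*, then there exists a constant c ∈ ℂ such that g(z) = c/z for all z ∈ 𝔻*. -/

import Mathlib

open Complex Filter Topology Set

/-- If `g` is holomorphic on the punctured unit disc `𝔻* = {z : 0 < |z| < 1}` and
`λ g(λ z) = g z` on `𝔻*` for some `λ` with `0 < |λ| < 1`, then there is a constant `c`
with `g z = c / z` on `𝔻*`. -/
theorem stmt_1 (g : ℂ → ℂ) (lam : ℂ)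
    (hg : DifferentiableOn ℂ g {z : ℂ | 0 < ‖z‖ ∧ ‖z‖ < 1})
    (hlam0 : 0 < ‖lam‖) (hlam1 : ‖lam‖ < 1)
    (hinv : ∀ z ∈ {z : ℂ | 0 < ‖z‖ ∧ ‖z‖ < 1},
      lam * g (lam * z) = g z) :
    ∃ c : ℂ, ∀ z ∈ {z : ℂ | 0 < ‖z‖ ∧ ‖z‖ < 1}, g z = c / z := by
  set S : Set ℂ := {z : ℂ | 0 < ‖z‖ ∧ ‖z‖ < 1} with hS
  have hlamne : lam ≠ 0 := by
    intro h; simp [h] at hlam0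
  set a : ℝ := ‖lam‖ with ha
  set h : ℂ → ℂ := fun z => z * g z with hh
  have hSopen : IsOpen S := by
    have : S = (norm : ℂ → ℝ) ⁻¹' (Set.Ioo 0 1) := by ext z; simp [hS, Set.mem_Ioo]
    rw [this]
    exact isOpen_Ioo.preimage continuous_norm
  have hhd : DifferentiableOn ℂ h S := differentiableOn_id.mul hg
  have hmul : ∀ z ∈ S, lam * z ∈ S := by
    rintro z ⟨hz0, hz1⟩
    refine ⟨by simp only [norm_mul]; positivity, ?_⟩
    simp only [norm_mul]
    calc ‖lam‖ * ‖z‖ < 1 * 1 :=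
          mul_lt_mul' hlam1.le hz1 hz0.le one_pos
      _ = 1 := one_mul 1
  have hhi : ∀ z ∈ S, h (lam * z) = h z := by
    intro z hz
    have := hinv z hz
    show lam * z * g (lam * z) = z * g z
    calc lam * z * g (lam * z) = z * (lam * g (lam * z)) := by ring
      _ = z * g z := by rw [this]
  have hhin : ∀ n : ℕ, ∀ z ∈ S, h (lam ^ n * z) = h z := by
    intro n
    induction n with
    | zero => intro z hz; simp
    | succ n ih =>
      intro z hz
      have h1 : lam ^ (n + 1) * z = lam ^ n * (lam * z) := by ring
      rw [h1, ih _ (hmul z hz), hhi z hz]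
  -- the compact annulus
  set K : Set ℂ := {w : ℂ | a / 2 ≤ ‖w‖ ∧ ‖w‖ ≤ 1 / 2} with hK
  have hKS : K ⊆ S := by
    rintro w ⟨h1, h2⟩
    exact ⟨lt_of_lt_of_le (by positivity) h1, lt_of_le_of_lt h2 (by norm_num)⟩
  have hKc : IsCompact K := by
    have hcl : IsClosed K := by
      have : K = (norm : ℂ → ℝ) ⁻¹' (Set.Icc (a / 2) (1 / 2)) := by
        ext w; simp [hK, Set.mem_Icc]
      rw [this]
      exact isClosed_Icc.preimage continuous_norm
    refine (isCompact_closedBall (0 : ℂ) (1 / 2)).of_isClosed_subset hcl ?_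
    rintro w ⟨_, h2⟩
    simpa [Metric.mem_closedBall, Complex.dist_eq] using h2
  have ha0 : 0 < a := hlam0
  -- reduction: every value of h on S is attained on K
  have hred : ∀ z ∈ S, ∃ w ∈ K, h z = h w := by
    rintro z ⟨hz0, hz1⟩
    -- step 1: move inward
    have hex1 : ∃ m : ℕ, a ^ m * ‖z‖ ≤ 1 / 2 := by
      have h1 := tendsto_pow_atTop_nhds_zero_of_lt_one (le_of_lt hlam0) hlam1
      have h2 := (h1.mul_const (‖z‖)).eventually_le_const
        (show (0 : ℝ) * ‖z‖ < 1 / 2 by simp)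
      exact h2.exists
    obtain ⟨m, hm1⟩ := hex1
    set z₁ : ℂ := lam ^ m * z with hz₁def
    have habs1 : ‖z₁‖ ≤ 1 / 2 := by
      simpa [hz₁def, norm_mul, norm_pow] using hm1
    have hz₁0 : 0 < ‖z₁‖ := by
      simp only [hz₁def, norm_mul, norm_pow]; positivity
    have hz₁S : z₁ ∈ S := ⟨hz₁0, lt_of_le_of_lt habs1 (by norm_num)⟩
    have hhz₁ : h z₁ = h z := hhin m z ⟨hz0, hz1⟩
    -- step 2: move outward into K
    have hex2 : ∃ n : ℕ, a ^ n * (a / 2) < ‖z₁‖ := by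
      have h1 := tendsto_pow_atTop_nhds_zero_of_lt_one (le_of_lt hlam0) hlam1
      have h2 := (h1.mul_const (a / 2)).eventually_lt_const
        (show ‖z₁‖ > (0 : ℝ) * (a / 2) by simpa using hz₁0)
      exact h2.exists
    set n := Nat.find hex2 with hn
    have hn1 : a ^ n * (a / 2) < ‖z₁‖ := Nat.find_spec hex2
    set w : ℂ := z₁ / lam ^ n with hwdef
    have hlampow : (lam : ℂ) ^ n ≠ 0 := pow_ne_zero n hlamne
    have habsw : ‖w‖ = ‖z₁‖ / a ^ n := by
      simp [hwdef, norm_div, norm_pow, ha]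
    have hapow : (0 : ℝ) < a ^ n := by positivity
    have hw1 : a / 2 ≤ ‖w‖ := by
      rw [habsw, le_div_iff₀ hapow]
      calc a / 2 * a ^ n = a ^ n * (a / 2) := by ring
        _ ≤ ‖z₁‖ := hn1.le
    have hw2 : ‖w‖ ≤ 1 / 2 := by
      rw [habsw, div_le_iff₀ hapow]
      rcases Nat.eq_zero_or_pos n with h0 | hpos
      · calc ‖z₁‖ ≤ 1 / 2 := habs1
          _ ≤ 1 / 2 * a ^ n := by rw [h0]; simp
      · have hk : ¬ a ^ (n - 1) * (a / 2) < ‖z₁‖ :=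
          Nat.find_min hex2 (Nat.sub_lt hpos one_pos)
        push_neg at hk
        calc ‖z₁‖ ≤ a ^ (n - 1) * (a / 2) := hk
          _ = 1 / 2 * a ^ (n - 1 + 1) := by ring
          _ = 1 / 2 * a ^ n := by rw [Nat.sub_add_cancel hpos]
    have hwS : w ∈ S := hKS ⟨hw1, hw2⟩
    have hz₁w : z₁ = lam ^ n * w := by
      rw [hwdef]; field_simp
    refine ⟨w, ⟨hw1, hw2⟩, ?_⟩
    rw [← hhz₁, hz₁w, hhin n w hwS]
  -- bound on K
  obtain ⟨C, hC⟩ := hKc.exists_bound_of_continuousOn (hhd.continuousOn.mono hKS)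
  have hSmem : S ∈ 𝓝[≠] (0 : ℂ) := by
    rw [mem_nhdsWithin]
    refine ⟨Metric.ball 0 1, Metric.isOpen_ball, by simp, ?_⟩
    rintro z ⟨hz1, hz2⟩
    refine ⟨?_, ?_⟩
    · simpa [AbsoluteValue.pos_iff] using hz2
    · simpa [Metric.mem_ball, Complex.dist_eq] using hz1
  have hd : ∀ᶠ z in 𝓝[≠] (0 : ℂ), DifferentiableAt ℂ h z :=
    eventually_of_mem hSmem fun z hz => hhd.differentiableAt (hSopen.mem_nhds hz)
  have h0 : h 0 = 0 := by simp [hh]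
  have hb : IsBoundedUnder (· ≤ ·) (𝓝[≠] (0 : ℂ)) fun z => ‖h z - h 0‖ := by
    refine ⟨C, eventually_map.2 (eventually_of_mem hSmem fun z hz => ?_)⟩
    obtain ⟨w, hw, he⟩ := hred z hz
    rw [h0, sub_zero, he]
    exact hC w hw
  have T := Complex.tendsto_limUnder_of_differentiable_on_punctured_nhds_of_bounded_under hd hb
  set c := limUnder (𝓝[≠] (0 : ℂ)) h with hc
  refine ⟨c, ?_⟩
  rintro z ⟨hz0, hz1⟩
  have hzne : z ≠ 0 := by intro h0'; simp [h0'] at hz0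
  have hu : Tendsto (fun k : ℕ => lam ^ k * z) atTop (𝓝[≠] (0 : ℂ)) := by
    apply tendsto_nhdsWithin_of_tendsto_nhds_of_eventually_within
    · have h1 : Tendsto (fun k : ℕ => lam ^ k) atTop (𝓝 0) :=
        tendsto_pow_atTop_nhds_zero_of_norm_lt_one (by exact hlam1)
      simpa using h1.mul_const z
    · exact Eventually.of_forall fun k =>
        mul_ne_zero (pow_ne_zero k hlamne) hzne
  have hconst : Tendsto (fun _ : ℕ => h z) atTop (𝓝 c) := by
    have := T.comp hu
    convert this using 2 with k
    exact (hhin k z ⟨hz0, hz1⟩).symm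
  have hzc : h z = c := tendsto_nhds_unique tendsto_const_nhds hconst
  rw [eq_div_iff hzne]
  calc g z * z = z * g z := mul_comm _ _
    _ = c := hzc
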